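/- Let n ≥ 2 and define ψ : (ℝ^{n−1} ∖ {0}) × ℝ → ℝⁿ × ℝⁿ × ℝ (coordinates (x,y,z)) as follows: for 1 ≤ i ≤ n−1, the i-th coordinates are (xᵢ, yᵢ) = (sᵢ cos(πτ), −sᵢ sin(πτ)); the n-th coordinates are (xₙ, yₙ) = (‖s‖/√2)·(cos(2πτ), sin(2πτ)); and z = 0. Then the image of ψ is Legendrian for the standard contact form: for every (s,τ) with s ≠ 0 and every (v,σ) ∈ ℝ^{n−1} × ℝ, α_std(ψ(s,τ))(Dψ(s,τ)(v,σ)) = 0, where α_std(x,y,z)(ẋ,ẏ,ż) := ż + Σ_{i=1}^{n} (xᵢ ẏᵢ − yᵢ ẋᵢ). -/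

import Mathlib

open scoped RealInnerProductSpace

noncomputable section

private lemma fderiv_mul_eval' {E : Type*} [NormedAddCommGroup E] [NormedSpace ℝ E]
    {f g : E → ℝ} {f' g' : E →L[ℝ] ℝ} {x : E} (hf : HasFDerivAt f f' x)
    (hg : HasFDerivAt g g' x) (w : E) :
    fderiv ℝ (fun y => f y * g y) x w = f x * g' w + g x * f' w := by
  rw [show (fun y => f y * g y) = f * g from rfl, (hf.mul hg).fderiv]
  simp

theorem statement_15 (m : ℕ) (hm : 1 ≤ m)
    (ψ : EuclideanSpace ℝ (Fin m) × ℝ →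
      EuclideanSpace ℝ (Fin (m + 1)) × EuclideanSpace ℝ (Fin (m + 1)) × ℝ)
    (hψx : ∀ (s : EuclideanSpace ℝ (Fin m)) (τ : ℝ) (i : Fin m),
      (ψ (s, τ)).1 (Fin.castSucc i) = s i * Real.cos (Real.pi * τ))
    (hψy : ∀ (s : EuclideanSpace ℝ (Fin m)) (τ : ℝ) (i : Fin m),
      (ψ (s, τ)).2.1 (Fin.castSucc i) = -(s i * Real.sin (Real.pi * τ)))
    (hψxn : ∀ (s : EuclideanSpace ℝ (Fin m)) (τ : ℝ),
      (ψ (s, τ)).1 (Fin.last m) = (‖s‖ / Real.sqrt 2) * Real.cos (2 * Real.pi * τ))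
    (hψyn : ∀ (s : EuclideanSpace ℝ (Fin m)) (τ : ℝ),
      (ψ (s, τ)).2.1 (Fin.last m) = (‖s‖ / Real.sqrt 2) * Real.sin (2 * Real.pi * τ))
    (hψz : ∀ (s : EuclideanSpace ℝ (Fin m)) (τ : ℝ), (ψ (s, τ)).2.2 = 0) :
    ∀ (s : EuclideanSpace ℝ (Fin m)) (τ : ℝ), s ≠ 0 →
      ∀ (v : EuclideanSpace ℝ (Fin m)) (σ : ℝ),
        (fderiv ℝ ψ (s, τ) (v, σ)).2.2
          + ∑ i : Fin (m + 1),
              ((ψ (s, τ)).1 i * (fderiv ℝ ψ (s, τ) (v, σ)).2.1 i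
                - (ψ (s, τ)).2.1 i * (fderiv ℝ ψ (s, τ) (v, σ)).1 i) = 0 := by
  intro s τ hs v σ
  have pi2 : Real.sin (Real.pi * τ) ^ 2 + Real.cos (Real.pi * τ) ^ 2 = 1 :=
    Real.sin_sq_add_cos_sq _
  have pi2' : Real.sin (2 * Real.pi * τ) ^ 2 + Real.cos (2 * Real.pi * τ) ^ 2 = 1 :=
    Real.sin_sq_add_cos_sq _
  set p : EuclideanSpace ℝ (Fin m) × ℝ := (s, τ) with hp
  -- basic HasFDerivAt facts for the factor functions
  have hP : ∀ i : Fin m, HasFDerivAt (fun q : EuclideanSpace ℝ (Fin m) × ℝ => q.1 i)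
      ((EuclideanSpace.proj i).comp (ContinuousLinearMap.fst ℝ _ _)) p :=
    fun i => ((EuclideanSpace.proj i : EuclideanSpace ℝ (Fin m) →L[ℝ] ℝ).hasFDerivAt).comp p (hasFDerivAt_fst)
  have hCd : ∀ a : ℝ, HasDerivAt (fun t : ℝ => Real.cos (a * t)) (-Real.sin (a * τ) * a) τ := by
    intro a
    exact ((Real.hasDerivAt_cos (a * τ)).comp τ ((hasDerivAt_id τ).const_mul a)).congr_deriv (by simp)
  have hSd : ∀ a : ℝ, HasDerivAt (fun t : ℝ => Real.sin (a * t)) (Real.cos (a * τ) * a) τ := by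
    intro a
    exact ((Real.hasDerivAt_sin (a * τ)).comp τ ((hasDerivAt_id τ).const_mul a)).congr_deriv (by simp)
  have hC : ∀ a : ℝ, HasFDerivAt (fun q : EuclideanSpace ℝ (Fin m) × ℝ => Real.cos (a * q.2))
      ((-Real.sin (a * τ) * a) • ContinuousLinearMap.snd ℝ _ _) p :=
    fun a => (hCd a).comp_hasFDerivAt (f := Prod.snd) p (hasFDerivAt_snd)
  have hS : ∀ a : ℝ, HasFDerivAt (fun q : EuclideanSpace ℝ (Fin m) × ℝ => Real.sin (a * q.2))
      ((Real.cos (a * τ) * a) • ContinuousLinearMap.snd ℝ _ _) p :=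
    fun a => (hSd a).comp_hasFDerivAt (f := Prod.snd) p (hasFDerivAt_snd)
  -- norm factor
  have hnormdiff : DifferentiableAt ℝ (fun q : EuclideanSpace ℝ (Fin m) × ℝ => ‖q.1‖) p :=
    DifferentiableAt.norm (𝕜 := ℝ) differentiableAt_fst hs
  set G : EuclideanSpace ℝ (Fin m) × ℝ →L[ℝ] ℝ :=
    fderiv ℝ (fun q : EuclideanSpace ℝ (Fin m) × ℝ => ‖q.1‖) p with hG
  have hGd : HasFDerivAt (fun q : EuclideanSpace ℝ (Fin m) × ℝ => ‖q.1‖) G p :=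
    hnormdiff.hasFDerivAt
  set N : ℝ := G (v, σ) with hN
  have hF : HasFDerivAt (fun q : EuclideanSpace ℝ (Fin m) × ℝ => (Real.sqrt 2)⁻¹ * ‖q.1‖)
      ((Real.sqrt 2)⁻¹ • G) p := hGd.const_mul _
  -- differentiability of ψ
  have hψdiff : DifferentiableAt ℝ ψ p := by
    have h1 : DifferentiableAt ℝ (fun q => (ψ q).1) p := by
      rw [differentiableAt_euclidean]
      intro i
      induction i using Fin.lastCases with
      | last =>
        have : (fun q : EuclideanSpace ℝ (Fin m) × ℝ => (ψ q).1 (Fin.last m))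
            = fun q => (Real.sqrt 2)⁻¹ * ‖q.1‖ * Real.cos (2 * Real.pi * q.2) := by
          funext q
          rw [hψxn q.1 q.2]
          ring
        rw [this]
        exact (hF.mul (hC (2 * Real.pi))).differentiableAt
      | cast i =>
        have : (fun q : EuclideanSpace ℝ (Fin m) × ℝ => (ψ q).1 (Fin.castSucc i))
            = fun q => q.1 i * Real.cos (Real.pi * q.2) := by
          funext q
          exact hψx q.1 q.2 i
        rw [this]
        exact ((hP i).mul (hC Real.pi)).differentiableAt
    have h2 : DifferentiableAt ℝ (fun q => (ψ q).2.1) p := by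
      rw [differentiableAt_euclidean]
      intro i
      induction i using Fin.lastCases with
      | last =>
        have : (fun q : EuclideanSpace ℝ (Fin m) × ℝ => (ψ q).2.1 (Fin.last m))
            = fun q => (Real.sqrt 2)⁻¹ * ‖q.1‖ * Real.sin (2 * Real.pi * q.2) := by
          funext q
          rw [hψyn q.1 q.2]
          ring
        rw [this]
        exact (hF.mul (hS (2 * Real.pi))).differentiableAt
      | cast i =>
        have : (fun q : EuclideanSpace ℝ (Fin m) × ℝ => (ψ q).2.1 (Fin.castSucc i))
            = fun q => -(q.1 i * Real.sin (Real.pi * q.2)) := by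
          funext q
          exact hψy q.1 q.2 i
        rw [this]
        exact ((hP i).mul (hS Real.pi)).differentiableAt.neg
    have h3 : DifferentiableAt ℝ (fun q => (ψ q).2.2) p := by
      have : (fun q : EuclideanSpace ℝ (Fin m) × ℝ => (ψ q).2.2) = fun _ => (0 : ℝ) := by
        funext q
        exact hψz q.1 q.2
      rw [this]
      exact differentiableAt_const _
    exact h1.prodMk (h2.prodMk h3)
  -- extraction of coordinates of the derivative
  have hsplit : ∀ (L : (EuclideanSpace ℝ (Fin (m + 1)) × EuclideanSpace ℝ (Fin (m + 1)) × ℝ)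
      →L[ℝ] ℝ) (g : EuclideanSpace ℝ (Fin m) × ℝ → ℝ), (∀ q, L (ψ q) = g q) →
      L (fderiv ℝ ψ p (v, σ)) = fderiv ℝ g p (v, σ) := by
    intro L g hLg
    have h := (L.hasFDerivAt.comp p hψdiff.hasFDerivAt).fderiv
    have hfun : (⇑L ∘ ψ) = g := funext hLg
    rw [← hfun, h]
    rfl
  -- the z-coordinate derivative vanishes
  have ez : (fderiv ℝ ψ p (v, σ)).2.2 = 0 := by
    have := hsplit ((ContinuousLinearMap.snd ℝ (EuclideanSpace ℝ (Fin (m + 1))) ℝ).comp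
      (ContinuousLinearMap.snd ℝ (EuclideanSpace ℝ (Fin (m + 1))) _)) (fun _ => 0)
      (fun q => hψz q.1 q.2)
    simpa using this
  -- x-coordinate derivatives, i < m
  have ex : ∀ i : Fin m, (fderiv ℝ ψ p (v, σ)).1 (Fin.castSucc i)
      = s i * (σ * (-Real.sin (Real.pi * τ) * Real.pi)) + Real.cos (Real.pi * τ) * v i := by
    intro i
    have := hsplit ((EuclideanSpace.proj (Fin.castSucc i)).comp
      (ContinuousLinearMap.fst ℝ _ _)) (fun q => q.1 i * Real.cos (Real.pi * q.2))
      (fun q => hψx q.1 q.2 i)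
    simp only [ContinuousLinearMap.comp_apply, ContinuousLinearMap.coe_fst',
      PiLp.proj_apply] at this
    rw [this, fderiv_mul_eval' (hP i) (hC Real.pi)]
    simp only [hp, ContinuousLinearMap.add_apply, ContinuousLinearMap.smul_apply,
      ContinuousLinearMap.comp_apply, ContinuousLinearMap.coe_fst', ContinuousLinearMap.coe_snd',
      PiLp.proj_apply, smul_eq_mul]
    ring
  -- y-coordinate derivatives, i < m
  have ey : ∀ i : Fin m, (fderiv ℝ ψ p (v, σ)).2.1 (Fin.castSucc i)
      = -(s i * (σ * (Real.cos (Real.pi * τ) * Real.pi)) + Real.sin (Real.pi * τ) * v i) := by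
    intro i
    have := hsplit ((EuclideanSpace.proj (Fin.castSucc i)).comp
      ((ContinuousLinearMap.fst ℝ (EuclideanSpace ℝ (Fin (m + 1))) ℝ).comp
        (ContinuousLinearMap.snd ℝ (EuclideanSpace ℝ (Fin (m + 1))) _)))
      (fun q => -(q.1 i * Real.sin (Real.pi * q.2)))
      (fun q => hψy q.1 q.2 i)
    simp only [ContinuousLinearMap.comp_apply, ContinuousLinearMap.coe_fst',
      ContinuousLinearMap.coe_snd', PiLp.proj_apply] at this
    rw [this, fderiv_fun_neg, ContinuousLinearMap.neg_apply,
      fderiv_mul_eval' (hP i) (hS Real.pi)]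
    simp only [hp, ContinuousLinearMap.add_apply, ContinuousLinearMap.smul_apply,
      ContinuousLinearMap.comp_apply, ContinuousLinearMap.coe_fst', ContinuousLinearMap.coe_snd',
      PiLp.proj_apply, smul_eq_mul]
    ring
  -- x-coordinate derivative, last
  have exn : (fderiv ℝ ψ p (v, σ)).1 (Fin.last m)
      = (Real.sqrt 2)⁻¹ * ‖s‖ * (σ * (-Real.sin (2 * Real.pi * τ) * (2 * Real.pi)))
        + Real.cos (2 * Real.pi * τ) * ((Real.sqrt 2)⁻¹ * N) := by
    have := hsplit ((EuclideanSpace.proj (Fin.last m)).comp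
      (ContinuousLinearMap.fst ℝ _ _))
      (fun q => (Real.sqrt 2)⁻¹ * ‖q.1‖ * Real.cos (2 * Real.pi * q.2))
      (fun q => by
        show (ψ (q.1, q.2)).1 (Fin.last m) = _
        rw [hψxn q.1 q.2]; ring)
    simp only [ContinuousLinearMap.comp_apply, ContinuousLinearMap.coe_fst',
      PiLp.proj_apply] at this
    rw [this, fderiv_mul_eval' hF (hC (2 * Real.pi))]
    simp only [hp, ContinuousLinearMap.add_apply, ContinuousLinearMap.smul_apply,
      ContinuousLinearMap.comp_apply, ContinuousLinearMap.coe_fst', ContinuousLinearMap.coe_snd',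
      PiLp.proj_apply, smul_eq_mul, hN]
    ring
  -- y-coordinate derivative, last
  have eyn : (fderiv ℝ ψ p (v, σ)).2.1 (Fin.last m)
      = (Real.sqrt 2)⁻¹ * ‖s‖ * (σ * (Real.cos (2 * Real.pi * τ) * (2 * Real.pi)))
        + Real.sin (2 * Real.pi * τ) * ((Real.sqrt 2)⁻¹ * N) := by
    have := hsplit ((EuclideanSpace.proj (Fin.last m)).comp
      ((ContinuousLinearMap.fst ℝ (EuclideanSpace ℝ (Fin (m + 1))) ℝ).comp
        (ContinuousLinearMap.snd ℝ (EuclideanSpace ℝ (Fin (m + 1))) _)))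
      (fun q => (Real.sqrt 2)⁻¹ * ‖q.1‖ * Real.sin (2 * Real.pi * q.2))
      (fun q => by
        show (ψ (q.1, q.2)).2.1 (Fin.last m) = _
        rw [hψyn q.1 q.2]; ring)
    simp only [ContinuousLinearMap.comp_apply, ContinuousLinearMap.coe_fst',
      ContinuousLinearMap.coe_snd', PiLp.proj_apply] at this
    rw [this, fderiv_mul_eval' hF (hS (2 * Real.pi))]
    simp only [hp, ContinuousLinearMap.add_apply, ContinuousLinearMap.smul_apply,
      ContinuousLinearMap.comp_apply, ContinuousLinearMap.coe_fst', ContinuousLinearMap.coe_snd',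
      PiLp.proj_apply, smul_eq_mul, hN]
    ring
  -- now compute
  have hnormsq : ∑ i : Fin m, s i ^ 2 = ‖s‖ ^ 2 := by
    rw [EuclideanSpace.norm_eq, Real.sq_sqrt (by positivity)]
    simp [sq_abs]
  have hsqrt2 : Real.sqrt 2 * Real.sqrt 2 = 2 := Real.mul_self_sqrt (by norm_num)
  have hsqrt2ne : Real.sqrt 2 ≠ 0 := by positivity
  rw [ez, Fin.sum_univ_castSucc]
  have hsum : ∑ i : Fin m,
      ((ψ p).1 (Fin.castSucc i) * (fderiv ℝ ψ p (v, σ)).2.1 (Fin.castSucc i)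
        - (ψ p).2.1 (Fin.castSucc i) * (fderiv ℝ ψ p (v, σ)).1 (Fin.castSucc i))
      = ∑ i : Fin m, (-(Real.pi * σ * s i ^ 2)) := by
    refine Finset.sum_congr rfl fun i _ => ?_
    rw [ex i, ey i, hψx s τ i, hψy s τ i]
    linear_combination (-(Real.pi * σ * s i ^ 2)) * pi2
  have hlast : (ψ p).1 (Fin.last m) * (fderiv ℝ ψ p (v, σ)).2.1 (Fin.last m)
      - (ψ p).2.1 (Fin.last m) * (fderiv ℝ ψ p (v, σ)).1 (Fin.last m)
      = Real.pi * σ * ‖s‖ ^ 2 := by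
    rw [exn, eyn, hψxn s τ, hψyn s τ]
    field_simp
    linear_combination (2 * ‖s‖ * Real.pi * σ) * pi2'
      - (‖s‖ * Real.pi * σ) * Real.sq_sqrt (by norm_num : (0:ℝ) ≤ 2)
  rw [hsum, hlast, Finset.sum_neg_distrib]
  rw [← Finset.mul_sum, hnormsq]
  ring
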